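/- arXiv:math/0104050 — 4 statements merged into one kernel-verified Lean document; each statement's English description precedes it below -/
import Mathlib

section
/- Let W be the Weyl group of a root system Σ in a Euclidean space a, let a_P ⊂ a be the kernel of a single root α ∈ Σ (so that the stabilizer W_P of a_P pointwise is {1, s_α}), and let a_Q ⊂ a be any subspace. If s, t ∈ W satisfy sλ|_{a_P} = tλ|_{a_P} for all λ vanishing on the orthocomplement of a_Q (i.e. all λ ∈ a_Q^*), then W_P s W_Q = W_P t W_Q, where W_Q is the pointwise stabilizer in W of a_Q. In other words, the natural projection W_P\W/W_Q → W/~_{P|Q} is injective when a_P has codimension 1. -/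
open scoped RealInnerProductSpace

variable {E : Type*} [NormedAddCommGroup E] [InnerProductSpace ℝ E] [FiniteDimensional ℝ E]

/-- The orthogonal reflection `s_α` in the hyperplane `α^⊥`. -/
noncomputable def rootReflection (α : E) : E ≃ₗᵢ[ℝ] E :=
  Submodule.reflection ((ℝ ∙ α)ᗮ)

/-- The Weyl group of `Σ`: the group generated by the reflections in the roots. -/
noncomputable def weylGroup (S : Finset E) : Subgroup (E ≃ₗᵢ[ℝ] E) :=
  Subgroup.closure {g | ∃ α ∈ S, g = rootReflection α}

/-- Let `Σ` be a root system in a Euclidean space with Weyl group `W`, let `a_P = ker α`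
for a root `α` and `a_Q` any subspace.  If `s, t ∈ W` satisfy `sλ = tλ` on `a_P` for every
`λ ∈ a_Q^*` (i.e. every functional vanishing on `a_Q^⊥`), then `W_P s W_Q = W_P t W_Q`,
where `W_P` and `W_Q` are the pointwise stabilizers in `W` of `a_P` and `a_Q`. -/
theorem double_coset_determined_on_codim_one
    (S : Finset E) (hne : ∀ α ∈ S, α ≠ 0)
    (hrefl : ∀ α ∈ S, ∀ β ∈ S, rootReflection α β ∈ S)
    (hcrys : ∀ α ∈ S, ∀ β ∈ S, ∃ k : ℤ, 2 * ⟪α, β⟫ = (k : ℝ) * ⟪α, α⟫)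
    (hspan : Submodule.span ℝ (S : Set E) = ⊤)
    (α : E) (hα : α ∈ S) (aQ : Submodule ℝ E)
    (s t : E ≃ₗᵢ[ℝ] E) (hs : s ∈ weylGroup S) (ht : t ∈ weylGroup S)
    (hyp : ∀ lam : E →ₗ[ℝ] ℝ, (∀ w ∈ aQᗮ, lam w = 0) →
      ∀ x ∈ (ℝ ∙ α)ᗮ, lam (s⁻¹ x) = lam (t⁻¹ x)) :
    {u : E ≃ₗᵢ[ℝ] E | ∃ p q : E ≃ₗᵢ[ℝ] E,
        p ∈ weylGroup S ∧ (∀ x ∈ (ℝ ∙ α)ᗮ, p x = x) ∧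
        q ∈ weylGroup S ∧ (∀ x ∈ aQ, q x = x) ∧ u = p * s * q} =
    {u : E ≃ₗᵢ[ℝ] E | ∃ p q : E ≃ₗᵢ[ℝ] E,
        p ∈ weylGroup S ∧ (∀ x ∈ (ℝ ∙ α)ᗮ, p x = x) ∧
        q ∈ weylGroup S ∧ (∀ x ∈ aQ, q x = x) ∧ u = p * t * q} := by
  have hαne : α ≠ 0 := hne α hα
  set σ : E ≃ₗᵢ[ℝ] E := rootReflection α with hσ
  have hσfix : ∀ x ∈ (ℝ ∙ α)ᗮ, σ x = x := fun x hx => Submodule.reflection_mem_subspace_eq_self hx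
  have hσα : σ α = -α :=
    Submodule.reflection_mem_subspace_orthogonal_precomplement_eq_neg
      (Submodule.mem_span_singleton_self α)
  have hσW : σ ∈ weylGroup S := Subgroup.subset_closure ⟨α, hα, rfl⟩
  have hσσ : σ * σ = 1 := by
    ext x
    simp only [LinearIsometryEquiv.coe_mul, Function.comp_apply, LinearIsometryEquiv.coe_one,
      id_eq]
    exact Submodule.reflection_reflection _ x
  -- key pointwise dichotomy
  have key : ∀ v ∈ aQ, s v = t v ∨ s v = σ (t v) := by
    intro v hv
    -- the functional ⟪v, ·⟫ vanishes on aQᗮ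
    have h1 : ∀ x ∈ (ℝ ∙ α)ᗮ, ⟪x, s v - t v⟫ = 0 := by
      intro x hx
      have hlam : ∀ w ∈ aQᗮ, ((innerSL ℝ v : E →L[ℝ] ℝ) : E →ₗ[ℝ] ℝ) w = 0 := by
        intro w hw
        simpa using (Submodule.mem_orthogonal aQ w).mp hw v hv
      have h := hyp _ hlam x hx
      simp only [ContinuousLinearMap.coe_coe, innerSL_apply_apply] at h
      -- h : ⟪v, s⁻¹ x⟫ = ⟪v, t⁻¹ x⟫
      have hs' : ⟪v, s⁻¹ x⟫ = ⟪s v, x⟫ := by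
        conv_rhs => rw [show x = s (s⁻¹ x) by
          simp [LinearIsometryEquiv.coe_inv, LinearIsometryEquiv.apply_symm_apply]]
        rw [LinearIsometryEquiv.inner_map_map]
      have ht' : ⟪v, t⁻¹ x⟫ = ⟪t v, x⟫ := by
        conv_rhs => rw [show x = t (t⁻¹ x) by
          simp [LinearIsometryEquiv.coe_inv, LinearIsometryEquiv.apply_symm_apply]]
        rw [LinearIsometryEquiv.inner_map_map]
      rw [inner_sub_right, real_inner_comm (s v) x, real_inner_comm (t v) x, ← hs', ← ht', h,
        sub_self]
    have h2 : s v - t v ∈ ℝ ∙ α := by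
      rw [← Submodule.orthogonal_orthogonal (ℝ ∙ α)]
      exact (Submodule.mem_orthogonal _ _).mpr h1
    obtain ⟨c, hc⟩ := Submodule.mem_span_singleton.mp h2
    have hsv : s v = t v + c • α := by rw [hc]; abel
    -- norms are equal
    have hnorm : ⟪s v, s v⟫ = ⟪t v, t v⟫ := by
      rw [real_inner_self_eq_norm_sq, real_inner_self_eq_norm_sq,
        LinearIsometryEquiv.norm_map, LinearIsometryEquiv.norm_map]
    have hquad : c * (2 * ⟪t v, α⟫ + c * ⟪α, α⟫) = 0 := by
      have e : ⟪t v + c • α, t v + c • α⟫ = ⟪t v, t v⟫ := by rw [← hsv]; exact hnorm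
      simp only [inner_add_add_self, real_inner_smul_left, real_inner_smul_right] at e
      linear_combination e - c * real_inner_comm (t v) α
    rcases mul_eq_zero.mp hquad with hc0 | hc0
    · left; rw [hsv, hc0, zero_smul, add_zero]
    · right
      have hαα : ⟪α, α⟫ ≠ 0 := inner_self_ne_zero.mpr hαne
      set b : ℝ := ⟪α, t v⟫ / ⟪α, α⟫ with hb
      have hcb : c = -(2 * b) := by
        rw [hb, real_inner_comm (t v) α]
        field_simp
        linarith [hc0]
      have hw : t v - b • α ∈ (ℝ ∙ α)ᗮ := by
        rw [Submodule.mem_orthogonal_singleton_iff_inner_right, inner_sub_right,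
          real_inner_smul_right, hb]
        field_simp
        ring
      have hσt : σ (t v) = (t v - b • α) - b • α := by
        conv_lhs => rw [show t v = (t v - b • α) + b • α by abel]
        rw [map_add, hσfix _ hw, map_smul, hσα, smul_neg]
        abel
      rw [hsv, hσt, hcb]
      module
  -- one of the two alternatives holds uniformly on aQ
  have main : (∀ v ∈ aQ, s v = t v) ∨ (∀ v ∈ aQ, s v = σ (t v)) := by
    by_contra h
    push_neg at h
    obtain ⟨⟨a, ha, ha'⟩, ⟨b, hb, hb'⟩⟩ := h
    have h1 : s a = σ (t a) := (key a ha).resolve_left ha'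
    have h2 : s b = t b := (key b hb).resolve_right hb'
    rcases key (a + b) (aQ.add_mem ha hb) with h3 | h3
    · rw [map_add, map_add, h1, h2] at h3
      exact ha' (by rw [h1]; exact add_right_cancel h3)
    · rw [map_add, map_add, map_add, h1, h2] at h3
      exact hb' (by rw [h2]; exact add_left_cancel h3)
  -- produce p₀, q₀ with t = p₀ * s * q₀
  obtain ⟨p₀, q₀, hp₀W, hp₀fix, hq₀W, hq₀fix, hfact⟩ :
      ∃ p₀ q₀ : E ≃ₗᵢ[ℝ] E, p₀ ∈ weylGroup S ∧ (∀ x ∈ (ℝ ∙ α)ᗮ, p₀ x = x) ∧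
        q₀ ∈ weylGroup S ∧ (∀ x ∈ aQ, q₀ x = x) ∧ t = p₀ * s * q₀ := by
    rcases main with hm | hm
    · refine ⟨1, s⁻¹ * t, one_mem _, fun x _ => rfl, mul_mem (inv_mem hs) ht, ?_, by group⟩
      intro v hv
      simp only [LinearIsometryEquiv.coe_mul, Function.comp_apply, LinearIsometryEquiv.coe_inv]
      rw [← hm v hv]
      exact s.symm_apply_apply _
    · refine ⟨σ, s⁻¹ * (σ * t), hσW, hσfix, mul_mem (inv_mem hs) (mul_mem hσW ht), ?_, ?_⟩
      · intro v hv
        simp only [LinearIsometryEquiv.coe_mul, Function.comp_apply, LinearIsometryEquiv.coe_inv]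
        rw [← hm v hv]
        exact s.symm_apply_apply _
      · have : σ * s * (s⁻¹ * (σ * t)) = σ * σ * t := by group
        rw [this, hσσ, one_mul]
  -- inverses also fix the relevant subspaces
  have hp₀fix' : ∀ x ∈ (ℝ ∙ α)ᗮ, p₀⁻¹ x = x := by
    intro x hx
    conv_lhs => rw [← hp₀fix x hx]
    exact p₀.symm_apply_apply _
  have hq₀fix' : ∀ x ∈ aQ, q₀⁻¹ x = x := by
    intro x hx
    conv_lhs => rw [← hq₀fix x hx]
    exact q₀.symm_apply_apply _
  -- conclude the double cosets are equal
  ext u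
  constructor
  · rintro ⟨p, q, hpW, hpfix, hqW, hqfix, rfl⟩
    refine ⟨p * p₀⁻¹, q₀⁻¹ * q, mul_mem hpW (inv_mem hp₀W), ?_,
      mul_mem (inv_mem hq₀W) hqW, ?_, ?_⟩
    · intro x hx
      simp only [LinearIsometryEquiv.coe_mul, Function.comp_apply]
      rw [hp₀fix' x hx, hpfix x hx]
    · intro x hx
      simp only [LinearIsometryEquiv.coe_mul, Function.comp_apply]
      rw [hqfix x hx, hq₀fix' x hx]
    · rw [hfact]; group
  · rintro ⟨p, q, hpW, hpfix, hqW, hqfix, rfl⟩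
    refine ⟨p * p₀, q₀ * q, mul_mem hpW hp₀W, ?_, mul_mem hq₀W hqW, ?_, ?_⟩
    · intro x hx
      simp only [LinearIsometryEquiv.coe_mul, Function.comp_apply]
      rw [hp₀fix x hx, hpfix x hx]
    · intro x hx
      simp only [LinearIsometryEquiv.coe_mul, Function.comp_apply]
      rw [hqfix x hx, hq₀fix x hx]
    · rw [hfact]; group
end

section
/- Let a be a finite-dimensional real vector space, Δ a linearly independent subset of the dual a^*, and A = a with 'A^+(Δ, a_0)' = { X ∈ a : α(X) > α(X_0) for all α ∈ Δ } for a fixed X_0 ∈ a. Let V be a complete locally convex space and suppose the Δ-power series Σ_{μ ∈ NΔ} c_μ e^{−μ(X)} (c_μ ∈ V, NΔ the set of N-linear combinations of Δ) converges absolutely at X = X_0. Then it converges absolutely and uniformly on the closure of A^+(Δ, X_0). -/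
/-- Suppose the `Δ`-power series `∑_{μ ∈ ℕΔ} c_μ e^{−μ(X)}` (coefficients `c_μ` in a
complete locally convex space `V`, `Δ` a linearly independent subset of `a^*`) converges
absolutely at `X₀`, i.e. `∑_μ p(c_μ) e^{−μ(X₀)} < ∞` for every continuous seminorm `p`.
Then it converges absolutely and uniformly on the closure of
`A⁺(Δ, X₀) = {X : α(X) > α(X₀) ∀ α ∈ Δ}`, in the sense that
`∑_μ p(c_μ) · sup_{X ∈ closure A⁺} e^{−μ(X)} < ∞` for every continuous seminorm `p`. -/
theorem power_series_uniform_abs_convergence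
    {a : Type*} [NormedAddCommGroup a] [NormedSpace ℝ a] [FiniteDimensional ℝ a]
    {V : Type*} [AddCommGroup V] [Module ℝ V] [UniformSpace V] [IsUniformAddGroup V]
    [ContinuousSMul ℝ V] [LocallyConvexSpace ℝ V] [CompleteSpace V] [T2Space V]
    (Δ : Finset (a →ₗ[ℝ] ℝ))
    (hΔ : LinearIndependent ℝ (fun α : {x : a →ₗ[ℝ] ℝ // x ∈ Δ} => α.1))
    (c : ({x : a →ₗ[ℝ] ℝ // x ∈ Δ} → ℕ) → V) (X₀ : a)
    (habs : ∀ p : Seminorm ℝ V, Continuous p →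
      Summable fun m : {x : a →ₗ[ℝ] ℝ // x ∈ Δ} → ℕ =>
        p (c m) * Real.exp (-∑ α : {x : a →ₗ[ℝ] ℝ // x ∈ Δ}, (m α : ℝ) * α.1 X₀)) :
    ∀ p : Seminorm ℝ V, Continuous p →
      Summable fun m : {x : a →ₗ[ℝ] ℝ // x ∈ Δ} → ℕ =>
        p (c m) * ⨆ X ∈ closure {X : a | ∀ α ∈ Δ, α X₀ < α X},
          Real.exp (-∑ α : {x : a →ₗ[ℝ] ℝ // x ∈ Δ}, (m α : ℝ) * α.1 X) := by
  intro p hp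
  refine (habs p hp).of_nonneg_of_le ?_ ?_
  · intro m
    apply mul_nonneg (apply_nonneg p _)
    refine Real.iSup_nonneg fun X => Real.iSup_nonneg fun _ => (Real.exp_pos _).le
  · intro m
    apply mul_le_mul_of_nonneg_left _ (apply_nonneg p _)
    refine Real.iSup_le (fun X => Real.iSup_le (fun hX => ?_) (Real.exp_pos _).le)
      (Real.exp_pos _).le
    apply Real.exp_le_exp.2
    rw [neg_le_neg_iff]
    apply Finset.sum_le_sum
    intro α _
    apply mul_le_mul_of_nonneg_left _ (Nat.cast_nonneg _)
    -- α.1 X₀ ≤ α.1 X for X in the closure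
    have hclosed : IsClosed {Y : a | α.1 X₀ ≤ α.1 Y} :=
      isClosed_le continuous_const (LinearMap.continuous_of_finiteDimensional α.1)
    have hsub : {X : a | ∀ β ∈ Δ, β X₀ < β X} ⊆ {Y : a | α.1 X₀ ≤ α.1 Y} :=
      fun Y hY => (hY α.1 α.2).le
    exact (closure_minimal hsub hclosed) hX
end

section
/- Let V be a finite-dimensional real inner product space, X a finite subset of V \ {0}, and a ∈ V_C. Let M(a,X) be the ring of germs at a of meromorphic functions whose singular locus at a is contained in the union of X-hyperplanes through a. Then for every d : X → N and every u ∈ S(V) (constant-coefficient holomorphic differential operator) there exists an X-Laurent functional L at a whose d-component equals u; i.e. L φ = u(π_{a,d} φ)(a) for all φ ∈ π_{a,d}^{-1} O_a, where π_{a,d}(z) = Π_{ξ∈X} ⟨ξ, z−a⟩^{d(ξ)}. In particular, for every a there exists L ∈ M(a,X)*_laur with Lφ = φ(a) for all germs φ holomorphic at a. -/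
namespace LaurentFunctionals

variable {n : ℕ}

/-- The complex bilinear pairing `⟨ξ, z⟩` of `ξ ∈ ℝⁿ` with `z ∈ ℂⁿ`. -/
noncomputable def cpair (ξ : Fin n → ℝ) (z : Fin n → ℂ) : ℂ := ∑ i, (ξ i : ℂ) * z i

/-- The germ filter at `a`: neighborhoods of `a` intersected with the complement of the
union of the `X`-hyperplanes through `a`.  Germs of meromorphic functions at `a` with
singular locus along these hyperplanes are germs of functions along this filter. -/
noncomputable def germFilter (X : Finset (Fin n → ℝ)) (a : Fin n → ℂ) :
    Filter (Fin n → ℂ) :=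
  nhds a ⊓ Filter.principal {z | ∀ ξ ∈ X, cpair ξ (z - a) ≠ 0}

/-- The polynomial `π_{a,d}(z) = ∏_{ξ ∈ X} ⟨ξ, z − a⟩^{d ξ}`. -/
noncomputable def piPoly (X : Finset (Fin n → ℝ)) (a : Fin n → ℂ)
    (d : (Fin n → ℝ) → ℕ) : (Fin n → ℂ) → ℂ :=
  fun z => ∏ ξ ∈ X, cpair ξ (z - a) ^ d ξ

/-- The meromorphic function `π_{a,d}⁻¹ · g`. -/
noncomputable def mero (X : Finset (Fin n → ℝ)) (a : Fin n → ℂ)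
    (d : (Fin n → ℝ) → ℕ) (g : (Fin n → ℂ) → ℂ) : (Fin n → ℂ) → ℂ :=
  fun z => (piPoly X a d z)⁻¹ * g z

/-- `O_a`: germs at `a` of holomorphic functions. -/
def Oa (X : Finset (Fin n → ℝ)) (a : Fin n → ℂ) :
    Set (Filter.Germ (germFilter X a) ℂ) :=
  {φ | ∃ g : (Fin n → ℂ) → ℂ, AnalyticAt ℂ g a ∧
    φ = (g : Filter.Germ (germFilter X a) ℂ)}

/-- `M(a, X)`: germs at `a` of meromorphic functions whose singular locus at `a` lies in
the union of the `X`-hyperplanes through `a`; equivalently `∪_d π_{a,d}⁻¹ O_a`. -/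
def Ma (X : Finset (Fin n → ℝ)) (a : Fin n → ℂ) :
    Set (Filter.Germ (germFilter X a) ℂ) :=
  {φ | ∃ (d : (Fin n → ℝ) → ℕ) (g : (Fin n → ℂ) → ℂ), AnalyticAt ℂ g a ∧
    φ = (mero X a d g : Filter.Germ (germFilter X a) ℂ)}

/-- The directional derivative operator `∂_v`. -/
noncomputable def dirD (v : Fin n → ℂ) (g : (Fin n → ℂ) → ℂ) : (Fin n → ℂ) → ℂ :=
  fun z => fderiv ℂ g z v

/-- The composition of directional derivatives along the word `w`. -/
noncomputable def applyWord (w : List (Fin n → ℂ)) (g : (Fin n → ℂ) → ℂ) :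
    (Fin n → ℂ) → ℂ :=
  w.foldr dirD g

/-- The action of an element `u ∈ S(V)` — a complex linear combination of words of
directional derivatives — on a function. -/
noncomputable def applyOp (u : List (ℂ × List (Fin n → ℂ))) (g : (Fin n → ℂ) → ℂ)
    (z : Fin n → ℂ) : ℂ :=
  (u.map fun p => p.1 * applyWord p.2 g z).sum

/-- `L` is an `X`-Laurent functional at `a`: a linear functional on `M(a, X)` such that
for every `d : X → ℕ` there is `u_d ∈ S(V)` with `L φ = u_d(π_{a,d} φ)(a)` for all
`φ ∈ π_{a,d}⁻¹ O_a`. -/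
def IsLaurentAt (X : Finset (Fin n → ℝ)) (a : Fin n → ℂ)
    (L : Filter.Germ (germFilter X a) ℂ → ℂ) : Prop :=
  (∀ φ ψ : Filter.Germ (germFilter X a) ℂ, φ ∈ Ma X a → ψ ∈ Ma X a →
    L (φ + ψ) = L φ + L ψ) ∧
  (∀ (z : ℂ) (φ : Filter.Germ (germFilter X a) ℂ), φ ∈ Ma X a →
    L (z • φ) = z * L φ) ∧
  (∀ d : (Fin n → ℝ) → ℕ, ∃ u : List (ℂ × List (Fin n → ℂ)),
    ∀ g : (Fin n → ℂ) → ℂ, AnalyticAt ℂ g a →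
      L (mero X a d g : Filter.Germ (germFilter X a) ℂ) = applyOp u g a)

open Filter Topology


/-! ### cpair basics -/

theorem cpair_add (ξ : Fin n → ℝ) (y z : Fin n → ℂ) :
    cpair ξ (y + z) = cpair ξ y + cpair ξ z := by
  simp [cpair, mul_add, Finset.sum_add_distrib]

theorem cpair_sub (ξ : Fin n → ℝ) (y z : Fin n → ℂ) :
    cpair ξ (y - z) = cpair ξ y - cpair ξ z := by
  simp [cpair, mul_sub, Finset.sum_sub_distrib]

theorem cpair_smul (ξ : Fin n → ℝ) (t : ℂ) (z : Fin n → ℂ) :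
    cpair ξ (t • z) = t * cpair ξ z := by
  simp only [cpair, Pi.smul_apply, smul_eq_mul, Finset.mul_sum]
  exact Finset.sum_congr rfl fun i _ => by ring

theorem cpair_zero (ξ : Fin n → ℝ) : cpair ξ 0 = 0 := by simp [cpair]

/-- The complexification of a real vector. -/
noncomputable def cvec (ξ : Fin n → ℝ) : Fin n → ℂ := fun i => (ξ i : ℂ)

theorem cpair_cvec_self (ξ : Fin n → ℝ) (hξ : ξ ≠ 0) : cpair ξ (cvec ξ) ≠ 0 := by
  have : cpair ξ (cvec ξ) = ((∑ i, ξ i * ξ i : ℝ) : ℂ) := by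
    simp [cpair, cvec]
  rw [this]
  have hpos : 0 < ∑ i, ξ i * ξ i := by
    rcases Function.ne_iff.1 hξ with ⟨i, hi⟩
    exact Finset.sum_pos' (fun j _ => mul_self_nonneg _)
      ⟨i, Finset.mem_univ i, mul_self_pos.2 hi⟩
  exact_mod_cast hpos.ne'

/-- The continuous linear functional `z ↦ cpair ξ z`. -/
noncomputable def cpairCLM (ξ : Fin n → ℝ) : (Fin n → ℂ) →L[ℂ] ℂ :=
  ∑ i : Fin n, (ξ i : ℂ) • (ContinuousLinearMap.proj i)

theorem cpairCLM_apply (ξ : Fin n → ℝ) (z : Fin n → ℂ) : cpairCLM ξ z = cpair ξ z := by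
  simp [cpairCLM, cpair, ContinuousLinearMap.sum_apply]

/-- The affine function `z ↦ ⟨ξ, z - a⟩`. -/
noncomputable def lfun (ξ : Fin n → ℝ) (a : Fin n → ℂ) : (Fin n → ℂ) → ℂ :=
  fun z => cpair ξ (z - a)

theorem lfun_eq (ξ : Fin n → ℝ) (a : Fin n → ℂ) :
    lfun ξ a = fun z => cpairCLM ξ (z - a) := by
  funext z; rw [cpairCLM_apply]; rfl

theorem hasFDerivAt_lfun (ξ : Fin n → ℝ) (a z : Fin n → ℂ) :
    HasFDerivAt (lfun ξ a) (cpairCLM ξ) z := by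
  rw [lfun_eq]
  have h := ((cpairCLM ξ).hasFDerivAt (x := z - a)).comp z
    ((hasFDerivAt_id z).sub_const a)
  rw [ContinuousLinearMap.comp_id] at h
  exact h

theorem lfun_analyticAt (ξ : Fin n → ℝ) (a z : Fin n → ℂ) :
    AnalyticAt ℂ (lfun ξ a) z := by
  rw [lfun_eq]
  have h1 : AnalyticAt ℂ (fun z : Fin n → ℂ => z - a) z :=
    analyticAt_id.sub analyticAt_const
  have h2 : AnalyticAt ℂ (⇑(cpairCLM ξ) ∘ fun z : Fin n → ℂ => z - a) z :=
    AnalyticAt.comp (f := fun z : Fin n → ℂ => z - a) ((cpairCLM ξ).analyticAt (z - a)) h1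
  exact h2

theorem lfun_apply_self (ξ : Fin n → ℝ) (a : Fin n → ℂ) : lfun ξ a a = 0 := by
  simp [lfun, cpair_zero]

/-! ### dirD and applyWord basics -/

variable {z : Fin n → ℂ} {f g : (Fin n → ℂ) → ℂ}

theorem applyWord_cons (v : Fin n → ℂ) (w : List (Fin n → ℂ)) (g : (Fin n → ℂ) → ℂ) :
    applyWord (v :: w) g = dirD v (applyWord w g) := rfl

theorem applyWord_append (w₁ w₂ : List (Fin n → ℂ)) (g : (Fin n → ℂ) → ℂ) :
    applyWord (w₁ ++ w₂) g = applyWord w₁ (applyWord w₂ g) := by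
  simp [applyWord, List.foldr_append]

theorem dirD_analyticAt (hf : AnalyticAt ℂ f z) (v : Fin n → ℂ) :
    AnalyticAt ℂ (dirD v f) z := by
  have h2 : AnalyticAt ℂ (⇑(ContinuousLinearMap.apply ℂ ℂ v) ∘ fderiv ℂ f) z :=
    AnalyticAt.comp (((ContinuousLinearMap.apply ℂ ℂ v)).analyticAt _) hf.fderiv
  exact h2

theorem applyWord_analyticAt (hf : AnalyticAt ℂ f z) (w : List (Fin n → ℂ)) :
    AnalyticAt ℂ (applyWord w f) z := by
  induction w with
  | nil => exact hf
  | cons v w ih => exact dirD_analyticAt ih v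

theorem dirD_congr_nhds (v : Fin n → ℂ) (h : f =ᶠ[𝓝 z] g) :
    dirD v f =ᶠ[𝓝 z] dirD v g :=
  (h.fderiv (𝕜 := ℂ)).mono fun y hy => by simp only [dirD, hy]

theorem dirD_congr_at (v : Fin n → ℂ) (h : f =ᶠ[𝓝 z] g) :
    dirD v f z = dirD v g z := by
  simp only [dirD, h.fderiv_eq]

theorem applyWord_congr_nhds (w : List (Fin n → ℂ)) (h : f =ᶠ[𝓝 z] g) :
    applyWord w f =ᶠ[𝓝 z] applyWord w g := by
  induction w with
  | nil => exact h
  | cons v w ih => exact dirD_congr_nhds v ih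

theorem applyWord_congr_at (w : List (Fin n → ℂ)) (h : f =ᶠ[𝓝 z] g) :
    applyWord w f z = applyWord w g z :=
  (applyWord_congr_nhds w h).eq_of_nhds

theorem dirD_add (hf : DifferentiableAt ℂ f z) (hg : DifferentiableAt ℂ g z)
    (v : Fin n → ℂ) :
    dirD v (fun y => f y + g y) z = dirD v f z + dirD v g z := by
  simp only [dirD, fderiv_fun_add hf hg, ContinuousLinearMap.add_apply]

theorem dirD_const_mul (hg : DifferentiableAt ℂ g z) (c : ℂ) (v : Fin n → ℂ) :
    dirD v (fun y => c * g y) z = c * dirD v g z := by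
  simp only [dirD, fderiv_const_mul hg c, ContinuousLinearMap.smul_apply, smul_eq_mul]

theorem dirD_mul (hf : DifferentiableAt ℂ f z) (hg : DifferentiableAt ℂ g z)
    (v : Fin n → ℂ) :
    dirD v (fun y => f y * g y) z = dirD v f z * g z + f z * dirD v g z := by
  simp only [dirD, fderiv_fun_mul hf hg, ContinuousLinearMap.add_apply,
    ContinuousLinearMap.smul_apply, smul_eq_mul]
  ring

theorem differentiableAt_listSum {α : Type*} (l : List α) (h : α → (Fin n → ℂ) → ℂ)
    (hd : ∀ q ∈ l, DifferentiableAt ℂ (h q) z) :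
    DifferentiableAt ℂ (fun y => (l.map fun q => h q y).sum) z := by
  induction l with
  | nil => simp only [List.map_nil, List.sum_nil]; exact differentiableAt_const (0 : ℂ)
  | cons q l ih =>
    simp only [List.map_cons, List.sum_cons]
    exact (hd q (by simp)).add (ih fun r hr => hd r (by simp [hr]))

theorem dirD_listSum {α : Type*} (l : List α) (h : α → (Fin n → ℂ) → ℂ)
    (hd : ∀ q ∈ l, DifferentiableAt ℂ (h q) z) (v : Fin n → ℂ) :
    dirD v (fun y => (l.map fun q => h q y).sum) z = (l.map fun q => dirD v (h q) z).sum := by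
  induction l with
  | nil => simp [dirD]
  | cons q l ih =>
    simp only [List.map_cons, List.sum_cons]
    rw [dirD_add (hd q (by simp)) (differentiableAt_listSum l h fun r hr => hd r (by simp [hr])) v,
      ih fun r hr => hd r (by simp [hr])]

theorem dirD_comm (hf : AnalyticAt ℂ f z) (v w : Fin n → ℂ) :
    dirD v (dirD w f) z = dirD w (dirD v f) z := by
  have hsymm := (hf.contDiffAt (n := 2)).isSymmSndFDerivAt (by norm_num)
  have key : ∀ u₁ u₂ : Fin n → ℂ, dirD u₁ (dirD u₂ f) z = fderiv ℂ (fderiv ℂ f) z u₁ u₂ := by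
    intro u₁ u₂
    have hdf : DifferentiableAt ℂ (fderiv ℂ f) z := hf.fderiv.differentiableAt
    have h1 : HasFDerivAt (⇑(ContinuousLinearMap.apply ℂ ℂ u₂) ∘ fderiv ℂ f)
        ((ContinuousLinearMap.apply ℂ ℂ u₂).comp (fderiv ℂ (fderiv ℂ f) z)) z :=
      ((ContinuousLinearMap.apply ℂ ℂ u₂).hasFDerivAt).comp z hdf.hasFDerivAt
    have h2 : dirD u₂ f = ⇑(ContinuousLinearMap.apply ℂ ℂ u₂) ∘ fderiv ℂ f := rfl
    rw [show dirD u₁ (dirD u₂ f) z = fderiv ℂ (dirD u₂ f) z u₁ from rfl, h2, h1.fderiv]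
    rfl
  rw [key, key, hsymm v w]
/-! ### applyOp algebra -/

theorem applyOp_nil (g : (Fin n → ℂ) → ℂ) (z : Fin n → ℂ) : applyOp [] g z = 0 := rfl

theorem applyOp_cons (p : ℂ × List (Fin n → ℂ)) (u : List (ℂ × List (Fin n → ℂ)))
    (g : (Fin n → ℂ) → ℂ) (z : Fin n → ℂ) :
    applyOp (p :: u) g z = p.1 * applyWord p.2 g z + applyOp u g z := by
  simp [applyOp]

theorem applyOp_append (u₁ u₂ : List (ℂ × List (Fin n → ℂ))) (g : (Fin n → ℂ) → ℂ)
    (z : Fin n → ℂ) :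
    applyOp (u₁ ++ u₂) g z = applyOp u₁ g z + applyOp u₂ g z := by
  simp [applyOp]

theorem applyOp_congr_at (u : List (ℂ × List (Fin n → ℂ))) (h : f =ᶠ[𝓝 z] g) :
    applyOp u f z = applyOp u g z := by
  induction u with
  | nil => rfl
  | cons p u ih => rw [applyOp_cons, applyOp_cons, ih, applyWord_congr_at p.2 h]

theorem sum_map_mul_left {α : Type*} (l : List α) (c : ℂ) (f : α → ℂ) :
    (l.map fun x => c * f x).sum = c * (l.map f).sum := by
  induction l with
  | nil => simp
  | cons x l ih => simp [ih, mul_add]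

theorem applyWord_add_at (w : List (Fin n → ℂ)) :
    ∀ z : Fin n → ℂ, AnalyticAt ℂ f z → AnalyticAt ℂ g z →
    applyWord w (fun y => f y + g y) z = applyWord w f z + applyWord w g z := by
  induction w with
  | nil => intro z _ _; rfl
  | cons v w ih =>
    intro z hf hg
    have hev : applyWord w (fun y => f y + g y) =ᶠ[𝓝 z]
        fun y => applyWord w f y + applyWord w g y := by
      filter_upwards [hf.eventually_analyticAt, hg.eventually_analyticAt] with y h1 h2
      exact ih y h1 h2
    rw [applyWord_cons, dirD_congr_at v hev,
      dirD_add ((applyWord_analyticAt hf w).differentiableAt)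
        ((applyWord_analyticAt hg w).differentiableAt) v]
    rfl

theorem applyWord_const_mul_at (w : List (Fin n → ℂ)) (c : ℂ) :
    ∀ z : Fin n → ℂ, AnalyticAt ℂ g z →
    applyWord w (fun y => c * g y) z = c * applyWord w g z := by
  induction w with
  | nil => intro z _; rfl
  | cons v w ih =>
    intro z hg
    have hev : applyWord w (fun y => c * g y) =ᶠ[𝓝 z] fun y => c * applyWord w g y := by
      filter_upwards [hg.eventually_analyticAt] with y h1
      exact ih y h1
    rw [applyWord_cons, dirD_congr_at v hev,
      dirD_const_mul ((applyWord_analyticAt hg w).differentiableAt) c v]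
    rfl

theorem applyOp_add_at (u : List (ℂ × List (Fin n → ℂ))) (hf : AnalyticAt ℂ f z)
    (hg : AnalyticAt ℂ g z) :
    applyOp u (fun y => f y + g y) z = applyOp u f z + applyOp u g z := by
  induction u with
  | nil => simp [applyOp_nil]
  | cons p u ih =>
    rw [applyOp_cons, applyOp_cons, applyOp_cons, ih, applyWord_add_at p.2 z hf hg]
    ring

theorem applyOp_const_mul_at (u : List (ℂ × List (Fin n → ℂ))) (c : ℂ)
    (hg : AnalyticAt ℂ g z) :
    applyOp u (fun y => c * g y) z = c * applyOp u g z := by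
  induction u with
  | nil => simp [applyOp_nil]
  | cons p u ih =>
    rw [applyOp_cons, applyOp_cons, ih, applyWord_const_mul_at p.2 c z hg]
    ring

/-! ### The splits (Leibniz) construction -/

def splits : List (Fin n → ℂ) → List (List (Fin n → ℂ) × List (Fin n → ℂ))
  | [] => [([], [])]
  | v :: w => (splits w).flatMap fun st => [(v :: st.1, st.2), (st.1, v :: st.2)]

theorem sum_map_bind_pair {α β : Type*} (l : List α) (A B : α → β) (h : β → ℂ) :
    ((l.flatMap fun q => [A q, B q]).map h).sum = (l.map fun q => h (A q) + h (B q)).sum := by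
  induction l with
  | nil => simp
  | cons q l ih => simp [ih, add_assoc]

theorem splits_spec (p : (Fin n → ℂ) → ℂ) (w : List (Fin n → ℂ)) :
    ∀ z : Fin n → ℂ, AnalyticAt ℂ p z → ∀ g : (Fin n → ℂ) → ℂ, AnalyticAt ℂ g z →
    applyWord w (fun y => p y * g y) z =
      ((splits w).map fun st => applyWord st.1 p z * applyWord st.2 g z).sum := by
  induction w with
  | nil => intro z _ g _; simp [splits, applyWord]
  | cons v w ih =>
    intro z hp g hg
    have hev : applyWord w (fun y => p y * g y) =ᶠ[𝓝 z]
        fun y => ((splits w).map fun st => applyWord st.1 p y * applyWord st.2 g y).sum := by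
      filter_upwards [hp.eventually_analyticAt, hg.eventually_analyticAt] with y h1 h2
      exact ih y h1 g h2
    rw [applyWord_cons, dirD_congr_at v hev,
      dirD_listSum (splits w) (fun st => fun y => applyWord st.1 p y * applyWord st.2 g y)
        (fun st _ => ((applyWord_analyticAt hp st.1).mul
          (applyWord_analyticAt hg st.2)).differentiableAt) v]
    rw [show splits (v :: w) = (splits w).flatMap fun st => [(v :: st.1, st.2), (st.1, v :: st.2)]
      from rfl]
    rw [sum_map_bind_pair]
    refine congrArg List.sum (List.map_congr_left fun st _ => ?_)
    rw [dirD_mul ((applyWord_analyticAt hp st.1).differentiableAt)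
      ((applyWord_analyticAt hg st.2).differentiableAt) v]
    rfl

/-- Downward step: composing an operator with multiplication by an entire function
is again given by an operator. -/
theorem exists_downstep (a : Fin n → ℂ) (p : (Fin n → ℂ) → ℂ) (hp : ∀ y, AnalyticAt ℂ p y)
    (u : List (ℂ × List (Fin n → ℂ))) :
    ∃ u' : List (ℂ × List (Fin n → ℂ)), ∀ g : (Fin n → ℂ) → ℂ, AnalyticAt ℂ g a →
      applyOp u' g a = applyOp u (fun y => p y * g y) a := by
  induction u with
  | nil => exact ⟨[], fun g _ => rfl⟩
  | cons q u ih =>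
    obtain ⟨u', hu'⟩ := ih
    refine ⟨((splits q.2).map fun st => (q.1 * applyWord st.1 p a, st.2)) ++ u', fun g hg => ?_⟩
    rw [applyOp_append, hu' g hg, applyOp_cons]
    congr 1
    rw [splits_spec p q.2 a (hp a) g hg]
    simp only [applyOp, List.map_map]
    rw [← sum_map_mul_left]
    refine congrArg List.sum (List.map_congr_left fun st _ => ?_)
    simp [mul_assoc]
/-! ### The canonical form and the upward (division) step -/

section Canon

variable (ξ : Fin n → ℝ) (s : Fin n → ℂ)

/-- Canonical expansion of a word with respect to the direction `s` and the hyperplane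
of `ξ`-orthogonal vectors. -/
noncomputable def canon : List (Fin n → ℂ) → List (ℂ × ℕ × List (Fin n → ℂ))
  | [] => [(1, 0, [])]
  | v :: W => (canon W).flatMap fun q =>
      [(q.1 * cpair ξ v, q.2.1 + 1, q.2.2), (q.1, q.2.1, (v - cpair ξ v • s) :: q.2.2)]

theorem canon_ortho (hs : cpair ξ s = 1) :
    ∀ W : List (Fin n → ℂ), ∀ q ∈ canon ξ s W, ∀ v ∈ q.2.2, cpair ξ v = 0 := by
  intro W
  induction W with
  | nil => intro q hq v hv; simp [canon] at hq; simp [hq] at hv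
  | cons v₀ W ih =>
    intro q hq v hv
    rw [show canon ξ s (v₀ :: W) = (canon ξ s W).flatMap fun q =>
      [(q.1 * cpair ξ v₀, q.2.1 + 1, q.2.2), (q.1, q.2.1, (v₀ - cpair ξ v₀ • s) :: q.2.2)]
      from rfl] at hq
    rw [List.mem_flatMap] at hq
    obtain ⟨r, hr, hq⟩ := hq
    simp only [List.mem_cons, List.mem_singleton, List.not_mem_nil, or_false] at hq
    rcases hq with hq | hq
    · subst hq; exact ih r hr v hv
    · subst hq
      simp only [List.mem_cons] at hv
      rcases hv with hv | hv
      · subst hv; rw [cpair_sub, cpair_smul, hs]; ring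
      · exact ih r hr v hv

/-- Pointwise decomposition of a directional derivative along `s` and an orthogonal part. -/
theorem dirD_decomp (v : Fin n → ℂ) (F : (Fin n → ℂ) → ℂ) (z : Fin n → ℂ) :
    dirD v F z = cpair ξ v * dirD s F z + dirD (v - cpair ξ v • s) F z := by
  have hv : v = cpair ξ v • s + (v - cpair ξ v • s) := by
    rw [add_sub_cancel]
  simp only [dirD]
  conv_lhs => rw [hv]
  rw [map_add, map_smul, smul_eq_mul]

theorem dirD_replicate_comm (v : Fin n → ℂ) (j : ℕ) :
    ∀ (z : Fin n → ℂ) (f : (Fin n → ℂ) → ℂ), AnalyticAt ℂ f z →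
      dirD v (applyWord (List.replicate j s) f) z
        = applyWord (List.replicate j s) (dirD v f) z := by
  induction j with
  | zero => intro z f _; rfl
  | succ j ih =>
    intro z f hf
    have h1 : applyWord (List.replicate (j+1) s) f = dirD s (applyWord (List.replicate j s) f) := by
      rw [List.replicate_succ]; rfl
    have h2 : applyWord (List.replicate (j+1) s) (dirD v f)
        = dirD s (applyWord (List.replicate j s) (dirD v f)) := by
      rw [List.replicate_succ]; rfl
    rw [h1, h2, dirD_comm (applyWord_analyticAt hf _) v s]
    refine dirD_congr_at s ?_
    filter_upwards [hf.eventually_analyticAt] with y hy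
    exact ih y f hy

theorem canon_spec (W : List (Fin n → ℂ)) :
    ∀ (z : Fin n → ℂ) (g : (Fin n → ℂ) → ℂ), AnalyticAt ℂ g z →
    applyWord W g z = ((canon ξ s W).map fun q =>
      q.1 * applyWord (List.replicate q.2.1 s ++ q.2.2) g z).sum := by
  induction W with
  | nil => intro z g _; simp [canon, applyWord]
  | cons v W ih =>
    intro z g hg
    have hev : applyWord W g =ᶠ[𝓝 z] fun y => ((canon ξ s W).map fun q =>
        q.1 * applyWord (List.replicate q.2.1 s ++ q.2.2) g y).sum := by
      filter_upwards [hg.eventually_analyticAt] with y hy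
      exact ih y g hy
    rw [applyWord_cons, dirD_congr_at v hev,
      dirD_listSum (canon ξ s W)
        (fun q => fun y => q.1 * applyWord (List.replicate q.2.1 s ++ q.2.2) g y)
        (fun q _ => ((analyticAt_const (v := q.1)).mul
          (applyWord_analyticAt hg _)).differentiableAt) v]
    rw [show canon ξ s (v :: W) = (canon ξ s W).flatMap fun q =>
      [(q.1 * cpair ξ v, q.2.1 + 1, q.2.2), (q.1, q.2.1, (v - cpair ξ v • s) :: q.2.2)]
      from rfl]
    rw [sum_map_bind_pair]
    refine congrArg List.sum (List.map_congr_left fun q _ => ?_)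
    rw [dirD_const_mul (applyWord_analyticAt hg _).differentiableAt q.1 v,
      dirD_decomp ξ s v]
    have e1 : dirD s (applyWord (List.replicate q.2.1 s ++ q.2.2) g) z
        = applyWord (List.replicate (q.2.1 + 1) s ++ q.2.2) g z := by
      rw [List.replicate_succ, List.cons_append]; rfl
    have e2 : dirD (v - cpair ξ v • s) (applyWord (List.replicate q.2.1 s ++ q.2.2) g) z
        = applyWord (List.replicate q.2.1 s ++ ((v - cpair ξ v • s) :: q.2.2)) g z := by
      rw [applyWord_append, applyWord_append,
        dirD_replicate_comm s (v - cpair ξ v • s) q.2.1 z (applyWord q.2.2 g)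
          (applyWord_analyticAt hg _)]
      rfl
    rw [e1, e2]
    ring

end Canon
section Upstep

variable {ξ : Fin n → ℝ} {s : Fin n → ℂ} {a : Fin n → ℂ}

theorem dirD_lfun (v : Fin n → ℂ) (z : Fin n → ℂ) :
    dirD v (lfun ξ a) z = cpair ξ v := by
  simp only [dirD, (hasFDerivAt_lfun ξ a z).fderiv, cpairCLM_apply]

/-- Multiplication by `lfun` commutes with `ξ`-orthogonal derivatives. -/
theorem ortho_word_mul (W : List (Fin n → ℂ)) (hW : ∀ v ∈ W, cpair ξ v = 0) :
    ∀ (z : Fin n → ℂ) (g : (Fin n → ℂ) → ℂ), AnalyticAt ℂ g z →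
      applyWord W (fun y => lfun ξ a y * g y) z = lfun ξ a z * applyWord W g z := by
  induction W with
  | nil => intro z g _; rfl
  | cons v W ih =>
    intro z g hg
    have hev : applyWord W (fun y => lfun ξ a y * g y) =ᶠ[𝓝 z]
        fun y => lfun ξ a y * applyWord W g y := by
      filter_upwards [hg.eventually_analyticAt] with y hy
      exact ih (fun v hv => hW v (by simp [hv])) y g hy
    rw [applyWord_cons, dirD_congr_at v hev,
      dirD_mul (lfun_analyticAt ξ a z).differentiableAt
        (applyWord_analyticAt hg W).differentiableAt v,
      dirD_lfun v z, hW v (by simp), applyWord_cons]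
    ring

/-- The basic one-variable computation: `∂_s^{j+1} (ℓ f) = ℓ ∂_s^{j+1} f + (j+1) ∂_s^j f`. -/
theorem spow_mul_lfun (hs : cpair ξ s = 1) (j : ℕ) :
    ∀ (z : Fin n → ℂ) (f : (Fin n → ℂ) → ℂ), AnalyticAt ℂ f z →
      applyWord (List.replicate (j+1) s) (fun y => lfun ξ a y * f y) z
        = lfun ξ a z * applyWord (List.replicate (j+1) s) f z
          + ((j:ℂ)+1) * applyWord (List.replicate j s) f z := by
  induction j with
  | zero =>
    intro z f hf
    have h0 : applyWord (List.replicate 1 s) (fun y => lfun ξ a y * f y) z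
        = dirD s (fun y => lfun ξ a y * f y) z := rfl
    have h0' : applyWord (List.replicate 1 s) f z = dirD s f z := rfl
    have h0'' : applyWord (List.replicate 0 s) f z = f z := rfl
    rw [h0, h0', h0'', dirD_mul (lfun_analyticAt ξ a z).differentiableAt hf.differentiableAt s,
      dirD_lfun s z, hs]
    push_cast
    ring
  | succ j ih =>
    intro z f hf
    have h1 : applyWord (List.replicate (j+2) s) (fun y => lfun ξ a y * f y)
        = dirD s (applyWord (List.replicate (j+1) s) (fun y => lfun ξ a y * f y)) := by
      rw [List.replicate_succ]; rfl
    have hev : applyWord (List.replicate (j+1) s) (fun y => lfun ξ a y * f y) =ᶠ[𝓝 z]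
        fun y => lfun ξ a y * applyWord (List.replicate (j+1) s) f y
          + ((j:ℂ)+1) * applyWord (List.replicate j s) f y := by
      filter_upwards [hf.eventually_analyticAt] with y hy
      exact ih y f hy
    rw [h1, dirD_congr_at s hev,
      dirD_add (f := fun y => lfun ξ a y * applyWord (List.replicate (j+1) s) f y)
          (g := fun y => ((j:ℂ)+1) * applyWord (List.replicate j s) f y)
          (((lfun_analyticAt ξ a z).mul
          (applyWord_analyticAt hf (List.replicate (j+1) s))).differentiableAt)
        ((analyticAt_const.mul (applyWord_analyticAt hf (List.replicate j s))).differentiableAt) s,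
      dirD_mul (lfun_analyticAt ξ a z).differentiableAt
        (applyWord_analyticAt hf (List.replicate (j+1) s)).differentiableAt s,
      dirD_const_mul (applyWord_analyticAt hf (List.replicate j s)).differentiableAt _ s,
      dirD_lfun s z, hs]
    have e1 : dirD s (applyWord (List.replicate (j+1) s) f) z
        = applyWord (List.replicate (j+2) s) f z := by
      rw [List.replicate_succ (n := j+1)]; rfl
    have e2 : dirD s (applyWord (List.replicate j s) f) z
        = applyWord (List.replicate (j+1) s) f z := by
      rw [List.replicate_succ (n := j)]; rfl
    rw [e1, e2]
    push_cast
    ring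

/-- The inversion identity for a canonical word. -/
theorem canon_word_upstep (hs : cpair ξ s = 1) (j : ℕ) (W : List (Fin n → ℂ))
    (hW : ∀ v ∈ W, cpair ξ v = 0) (g : (Fin n → ℂ) → ℂ) (hg : AnalyticAt ℂ g a) :
    applyWord (List.replicate (j+1) s ++ W) (fun y => lfun ξ a y * g y) a
      = ((j:ℂ)+1) * applyWord (List.replicate j s ++ W) g a := by
  rw [applyWord_append]
  have hev : applyWord W (fun y => lfun ξ a y * g y) =ᶠ[𝓝 a]
      fun y => lfun ξ a y * applyWord W g y := by
    filter_upwards [hg.eventually_analyticAt] with y hy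
    exact ortho_word_mul W hW y g hy
  rw [applyWord_congr_at (List.replicate (j+1) s) hev,
    spow_mul_lfun hs j a (applyWord W g) (applyWord_analyticAt hg W),
    lfun_apply_self, applyWord_append]
  ring

/-- Upward step for a single linear form: any operator `u` can be written as
`w` applied to `lfun ξ a * ·`. -/
theorem exists_upstep_lin (hξ : ξ ≠ 0) (a : Fin n → ℂ) (u : List (ℂ × List (Fin n → ℂ))) :
    ∃ w : List (ℂ × List (Fin n → ℂ)), ∀ g : (Fin n → ℂ) → ℂ, AnalyticAt ℂ g a →
      applyOp w (fun y => lfun ξ a y * g y) a = applyOp u g a := by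
  set t : ℂ := cpair ξ (cvec ξ) with ht
  have htne : t ≠ 0 := cpair_cvec_self ξ hξ
  set sv : Fin n → ℂ := t⁻¹ • cvec ξ with hsv
  have hs : cpair ξ sv = 1 := by rw [hsv, cpair_smul, ← ht]; field_simp
  induction u with
  | nil => exact ⟨[], fun g _ => rfl⟩
  | cons q u ih =>
    obtain ⟨w', hw'⟩ := ih
    refine ⟨((canon ξ sv q.2).map fun r =>
      (q.1 * r.1 * ((r.2.1:ℂ)+1)⁻¹, List.replicate (r.2.1+1) sv ++ r.2.2)) ++ w',
      fun g hg => ?_⟩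
    rw [applyOp_append, hw' g hg, applyOp_cons]
    congr 1
    rw [canon_spec ξ sv q.2 a g hg, ← sum_map_mul_left]
    simp only [applyOp, List.map_map]
    refine congrArg List.sum (List.map_congr_left fun r hr => ?_)
    simp only [Function.comp]
    rw [canon_word_upstep hs r.2.1 r.2.2 (canon_ortho ξ sv hs q.2 r hr) g hg]
    have hne : ((r.2.1:ℂ)+1) ≠ 0 := Nat.cast_add_one_ne_zero r.2.1
    field_simp

end Upstep
/-! ### Upward step for products -/

theorem list_prod_analyticAt {α : Type*} (F : α → (Fin n → ℂ) → ℂ) (l : List α)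
    (z : Fin n → ℂ) (h : ∀ q ∈ l, AnalyticAt ℂ (F q) z) :
    AnalyticAt ℂ (fun y => (l.map fun q => F q y).prod) z := by
  induction l with
  | nil => simp only [List.map_nil, List.prod_nil]; exact analyticAt_const
  | cons q l ih =>
    simp only [List.map_cons, List.prod_cons]
    exact (h q (by simp)).mul (ih fun r hr => h r (by simp [hr]))

/-- The product of the linear forms along a list. -/
noncomputable def lprod (a : Fin n → ℂ) (l : List (Fin n → ℝ)) : (Fin n → ℂ) → ℂ :=
  fun y => (l.map fun ξ => lfun ξ a y).prod

theorem lprod_analyticAt (a : Fin n → ℂ) (l : List (Fin n → ℝ)) (z : Fin n → ℂ) :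
    AnalyticAt ℂ (lprod a l) z :=
  list_prod_analyticAt _ l z fun ξ _ => lfun_analyticAt ξ a z

theorem exists_upstep_list (a : Fin n → ℂ) :
    ∀ l : List (Fin n → ℝ), (∀ ξ ∈ l, ξ ≠ 0) →
    ∀ u : List (ℂ × List (Fin n → ℂ)), ∃ w : List (ℂ × List (Fin n → ℂ)),
      ∀ g : (Fin n → ℂ) → ℂ, AnalyticAt ℂ g a →
        applyOp w (fun y => lprod a l y * g y) a = applyOp u g a := by
  intro l
  induction l with
  | nil =>
    intro _ u
    refine ⟨u, fun g hg => ?_⟩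
    have : (fun y => lprod a [] y * g y) = g := by
      funext y; simp [lprod]
    rw [this]
  | cons ξ l ih =>
    intro hl u
    obtain ⟨u₁, hu₁⟩ := ih (fun ζ hζ => hl ζ (by simp [hζ])) u
    obtain ⟨w, hw⟩ := exists_upstep_lin (hl ξ (by simp)) a u₁
    refine ⟨w, fun g hg => ?_⟩
    have hfn : (fun y => lprod a (ξ :: l) y * g y)
        = fun y => lfun ξ a y * (lprod a l y * g y) := by
      funext y; simp [lprod, mul_assoc]
    rw [hfn, hw (fun y => lprod a l y * g y) ((lprod_analyticAt a l a).mul hg), hu₁ g hg]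

/-! ### piPoly facts -/

theorem piPoly_eq_list (X : Finset (Fin n → ℝ)) (a : Fin n → ℂ) (e : (Fin n → ℝ) → ℕ) :
    piPoly X a e = fun y => (X.toList.map fun ξ => lfun ξ a y ^ e ξ).prod := by
  funext y
  rw [piPoly, ← Finset.prod_map_toList]
  rfl

theorem piPoly_analyticAt (X : Finset (Fin n → ℝ)) (a : Fin n → ℂ) (e : (Fin n → ℝ) → ℕ)
    (z : Fin n → ℂ) : AnalyticAt ℂ (piPoly X a e) z := by
  rw [piPoly_eq_list]
  exact list_prod_analyticAt _ _ z fun ξ _ => (lfun_analyticAt ξ a z).pow (e ξ)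

theorem piPoly_add (X : Finset (Fin n → ℝ)) (a : Fin n → ℂ) (e₁ e₂ : (Fin n → ℝ) → ℕ)
    (y : Fin n → ℂ) :
    piPoly X a (fun ξ => e₁ ξ + e₂ ξ) y = piPoly X a e₁ y * piPoly X a e₂ y := by
  simp [piPoly, pow_add, Finset.prod_mul_distrib]

theorem piPoly_congr (X : Finset (Fin n → ℝ)) (a : Fin n → ℂ) {e₁ e₂ : (Fin n → ℝ) → ℕ}
    (h : ∀ ξ ∈ X, e₁ ξ = e₂ ξ) : piPoly X a e₁ = piPoly X a e₂ := by
  funext y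
  exact Finset.prod_congr rfl fun ξ hξ => by rw [h ξ hξ]

theorem piPoly_const (X : Finset (Fin n → ℝ)) (a : Fin n → ℂ) (m : ℕ) (y : Fin n → ℂ) :
    piPoly X a (fun _ => m) y = (lprod a X.toList y) ^ m := by
  calc piPoly X a (fun _ => m) y = (∏ ξ ∈ X, cpair ξ (y - a)) ^ m := by
        rw [piPoly, Finset.prod_pow]
    _ = (lprod a X.toList y) ^ m := by
        rw [lprod, ← Finset.prod_map_toList]
        rfl

theorem piPoly_ne_zero (X : Finset (Fin n → ℝ)) (a : Fin n → ℂ) (e : (Fin n → ℝ) → ℕ)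
    {z : Fin n → ℂ} (hz : ∀ ξ ∈ X, cpair ξ (z - a) ≠ 0) : piPoly X a e z ≠ 0 :=
  Finset.prod_ne_zero_iff.2 fun ξ hξ => pow_ne_zero _ (hz ξ hξ)

/-- A compatible sequence of operators for the increasing levels. -/
theorem exists_op_seq (X : Finset (Fin n → ℝ)) (hX : ∀ ξ ∈ X, ξ ≠ 0) (a : Fin n → ℂ)
    (u : List (ℂ × List (Fin n → ℂ))) :
    ∃ us : ℕ → List (ℂ × List (Fin n → ℂ)), us 0 = u ∧
      ∀ (k : ℕ) (g : (Fin n → ℂ) → ℂ), AnalyticAt ℂ g a →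
        applyOp (us (k+1)) (fun y => lprod a X.toList y * g y) a = applyOp (us k) g a := by
  have hXl : ∀ ξ ∈ X.toList, ξ ≠ 0 := fun ξ hξ => hX ξ (Finset.mem_toList.1 hξ)
  choose F hF using exists_upstep_list a X.toList hXl
  refine ⟨fun k => F^[k] u, rfl, fun k g hg => ?_⟩
  simp only []
  rw [Function.iterate_succ_apply']
  exact hF (F^[k] u) g hg

theorem op_seq_iter (X : Finset (Fin n → ℝ)) (a : Fin n → ℂ)
    {us : ℕ → List (ℂ × List (Fin n → ℂ))}
    (hus : ∀ (k : ℕ) (g : (Fin n → ℂ) → ℂ), AnalyticAt ℂ g a →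
      applyOp (us (k+1)) (fun y => lprod a X.toList y * g y) a = applyOp (us k) g a)
    (m : ℕ) : ∀ (k : ℕ) (g : (Fin n → ℂ) → ℂ), AnalyticAt ℂ g a →
      applyOp (us (k+m)) (fun y => piPoly X a (fun _ => m) y * g y) a
        = applyOp (us k) g a := by
  induction m with
  | zero =>
    intro k g hg
    have : (fun y => piPoly X a (fun _ => 0) y * g y) = g := by
      funext y; rw [piPoly_const]; simp
    rw [Nat.add_zero, this]
  | succ m ih =>
    intro k g hg
    have hfn : (fun y => piPoly X a (fun _ => m+1) y * g y)
        = fun y => lprod a X.toList y * (piPoly X a (fun _ => m) y * g y) := by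
      funext y; rw [piPoly_const, piPoly_const, pow_succ]
      ring
    have hga : AnalyticAt ℂ (fun y => piPoly X a (fun _ => m) y * g y) a :=
      (piPoly_analyticAt X a _ a).mul hg
    rw [show k + (m+1) = (k+m) + 1 from rfl, hfn, hus (k+m) _ hga, ih k g hg]
/-! ### Density of the complement of the hyperplanes, and germs -/

theorem exists_good_vec :
    ∀ l : List (Fin n → ℝ), (∀ ξ ∈ l, ξ ≠ 0) →
      ∃ v : Fin n → ℂ, ∀ ξ ∈ l, cpair ξ v ≠ 0 := by
  intro l
  induction l with
  | nil => exact fun _ => ⟨0, by simp⟩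
  | cons ξ l ih =>
    intro hl
    obtain ⟨v, hv⟩ := ih fun ζ hζ => hl ζ (by simp [hζ])
    have hξ : ξ ≠ 0 := hl ξ (by simp)
    -- choose ε avoiding the finitely many bad values
    obtain ⟨ε, hε⟩ := Infinite.exists_notMem_finset
      (((ξ :: l).map fun η => -cpair η v / cpair η (cvec ξ)).toFinset)
    refine ⟨v + ε • cvec ξ, fun η hη => ?_⟩
    intro hcontra
    rw [cpair_add, cpair_smul] at hcontra
    by_cases hz : cpair η (cvec ξ) = 0
    · rw [hz, mul_zero, add_zero] at hcontra
      rcases List.mem_cons.1 hη with rfl | hη'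
      · exact cpair_cvec_self η hξ (by rw [hz])
      · exact hv η hη' hcontra
    · apply hε
      rw [List.mem_toFinset, List.mem_map]
      refine ⟨η, hη, ?_⟩
      field_simp
      linear_combination -hcontra

theorem tendsto_pert (v : Fin n → ℂ) (y : Fin n → ℂ) :
    Filter.Tendsto (fun k : ℕ => y + ((k:ℂ)+1)⁻¹ • v) atTop (𝓝 y) := by
  have h1 : Filter.Tendsto (fun k : ℕ => ((k:ℝ)+1)⁻¹) atTop (𝓝 0) := by
    simpa using tendsto_one_div_add_atTop_nhds_zero_nat (𝕜 := ℝ)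
  have h2 : Filter.Tendsto (fun k : ℕ => (((k:ℝ)+1)⁻¹ : ℂ)) atTop (𝓝 0) := by
    have := (Complex.continuous_ofReal.tendsto (0:ℝ)).comp h1
    simpa [Function.comp_def] using this
  have h3 : Filter.Tendsto (fun k : ℕ => ((k:ℂ)+1)⁻¹) atTop (𝓝 0) := by
    refine h2.congr fun k => ?_
    push_cast
    rfl
  have h4 := h3.smul_const v
  rw [zero_smul] at h4
  simpa using tendsto_const_nhds.add h4

theorem eventually_in_S (X : Finset (Fin n → ℝ)) (a : Fin n → ℂ) {v : Fin n → ℂ}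
    (hv : ∀ ξ ∈ X, cpair ξ v ≠ 0) (y : Fin n → ℂ) :
    ∀ᶠ k : ℕ in atTop, ∀ ξ ∈ X, cpair ξ (y + ((k:ℂ)+1)⁻¹ • v - a) ≠ 0 := by
  rw [← Nat.cofinite_eq_atTop, Filter.eventually_cofinite]
  have hsub : {k : ℕ | ¬ ∀ ξ ∈ X, cpair ξ (y + ((k:ℂ)+1)⁻¹ • v - a) ≠ 0}
      ⊆ ⋃ ξ ∈ (X : Set (Fin n → ℝ)), {k : ℕ | cpair ξ (y + ((k:ℂ)+1)⁻¹ • v - a) = 0} := by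
    intro k hk
    push_neg at hk
    obtain ⟨ξ, hξ, hk⟩ := hk
    exact Set.mem_biUnion hξ hk
  refine Set.Finite.subset (Set.Finite.biUnion X.finite_toSet fun ξ hξ => ?_) hsub
  refine Set.Subsingleton.finite fun k hk k' hk' => ?_
  simp only [Set.mem_setOf_eq] at hk hk'
  have key : ∀ m : ℕ, cpair ξ (y + ((m:ℂ)+1)⁻¹ • v - a)
      = cpair ξ (y - a) + ((m:ℂ)+1)⁻¹ * cpair ξ v := by
    intro m
    have : y + ((m:ℂ)+1)⁻¹ • v - a = (y - a) + ((m:ℂ)+1)⁻¹ • v := by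
      abel
    rw [this, cpair_add, cpair_smul]
  rw [key] at hk hk'
  have : (((k:ℂ)+1)⁻¹ - ((k':ℂ)+1)⁻¹) * cpair ξ v = 0 := by linear_combination hk - hk'
  rcases mul_eq_zero.1 this with h | h
  · have h2 : ((k:ℂ)+1)⁻¹ = ((k':ℂ)+1)⁻¹ := by linear_combination h
    have hk1 : ((k:ℂ)+1) ≠ 0 := Nat.cast_add_one_ne_zero k
    have hk2 : ((k':ℂ)+1) ≠ 0 := Nat.cast_add_one_ne_zero k'
    field_simp at h2
    exact_mod_cast (add_right_cancel h2).symm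
  · exact absurd h (hv ξ (Finset.mem_coe.1 hξ))

theorem germ_eq_nhds (X : Finset (Fin n → ℝ)) (hX : ∀ ξ ∈ X, ξ ≠ 0) (a : Fin n → ℂ)
    {g₁ g₂ : (Fin n → ℂ) → ℂ} (h₁ : AnalyticAt ℂ g₁ a) (h₂ : AnalyticAt ℂ g₂ a)
    (h : g₁ =ᶠ[germFilter X a] g₂) : g₁ =ᶠ[𝓝 a] g₂ := by
  obtain ⟨v, hv⟩ := exists_good_vec X.toList fun ξ hξ => hX ξ (Finset.mem_toList.1 hξ)
  have hv' : ∀ ξ ∈ X, cpair ξ v ≠ 0 := fun ξ hξ => hv ξ (Finset.mem_toList.2 hξ)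
  have hmem : {z | (∀ ξ ∈ X, cpair ξ (z - a) ≠ 0) → g₁ z = g₂ z} ∈ 𝓝 a := by
    have := h
    rw [Filter.EventuallyEq, germFilter, Filter.eventually_inf_principal] at this
    exact this
  have hmem' : {z | (∀ ξ ∈ X, cpair ξ (z - a) ≠ 0) → g₁ z = g₂ z}
      ∩ {z | AnalyticAt ℂ g₁ z} ∩ {z | AnalyticAt ℂ g₂ z} ∈ 𝓝 a :=
    Filter.inter_mem (Filter.inter_mem hmem h₁.eventually_analyticAt) h₂.eventually_analyticAt
  obtain ⟨U, hUsub, hUopen, haU⟩ := mem_nhds_iff.1 hmem'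
  refine Filter.eventually_of_mem (hUopen.mem_nhds haU) fun y hy => ?_
  -- approximate y by points off the hyperplanes
  have hseq := tendsto_pert v y
  have hgood := eventually_in_S X a hv' y
  have hinU : ∀ᶠ k : ℕ in atTop, y + ((k:ℂ)+1)⁻¹ • v ∈ U :=
    hseq.eventually (hUopen.mem_nhds hy)
  have heq : ∀ᶠ k : ℕ in atTop,
      g₁ (y + ((k:ℂ)+1)⁻¹ • v) = g₂ (y + ((k:ℂ)+1)⁻¹ • v) := by
    filter_upwards [hgood, hinU] with k hk hU
    exact ((hUsub hU).1).1 hk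
  have hc₁ : ContinuousAt g₁ y := ((hUsub hy).1.2).continuousAt
  have hc₂ : ContinuousAt g₂ y := ((hUsub hy).2).continuousAt
  have t₁ : Filter.Tendsto (fun k : ℕ => g₁ (y + ((k:ℂ)+1)⁻¹ • v)) atTop (𝓝 (g₁ y)) :=
    (hc₁.tendsto).comp hseq
  have t₂ : Filter.Tendsto (fun k : ℕ => g₂ (y + ((k:ℂ)+1)⁻¹ • v)) atTop (𝓝 (g₂ y)) :=
    (hc₂.tendsto).comp hseq
  exact tendsto_nhds_unique (t₁.congr' heq) t₂
/-! ### Germ-level identities for mero -/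

theorem S_mem_germFilter (X : Finset (Fin n → ℝ)) (a : Fin n → ℂ) :
    {z : Fin n → ℂ | ∀ ξ ∈ X, cpair ξ (z - a) ≠ 0} ∈ germFilter X a :=
  Filter.mem_inf_of_right (Filter.mem_principal_self _)

theorem mero_germ_shift (X : Finset (Fin n → ℝ)) (a : Fin n → ℂ)
    (d' e : (Fin n → ℝ) → ℕ) (g : (Fin n → ℂ) → ℂ) :
    (mero X a d' g : Filter.Germ (germFilter X a) ℂ)
      = ↑(mero X a (fun ξ => d' ξ + e ξ) (fun y => piPoly X a e y * g y)) := by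
  rw [Filter.Germ.coe_eq]
  filter_upwards [S_mem_germFilter X a] with z hz
  have h1 : piPoly X a d' z ≠ 0 := piPoly_ne_zero X a d' hz
  have h2 : piPoly X a e z ≠ 0 := piPoly_ne_zero X a e hz
  simp only [mero]
  rw [piPoly_add]
  field_simp

theorem mero_exponent_congr (X : Finset (Fin n → ℝ)) (a : Fin n → ℂ)
    {e₁ e₂ : (Fin n → ℝ) → ℕ} (h : ∀ ξ ∈ X, e₁ ξ = e₂ ξ) (g : (Fin n → ℂ) → ℂ) :
    mero X a e₁ g = mero X a e₂ g := by
  funext y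
  simp only [mero, piPoly_congr X a h]

theorem mero_germ_cancel (X : Finset (Fin n → ℝ)) (hX : ∀ ξ ∈ X, ξ ≠ 0) (a : Fin n → ℂ)
    (D : (Fin n → ℝ) → ℕ) {h₁ h₂ : (Fin n → ℂ) → ℂ}
    (H₁ : AnalyticAt ℂ h₁ a) (H₂ : AnalyticAt ℂ h₂ a)
    (h : (mero X a D h₁ : Filter.Germ (germFilter X a) ℂ) = ↑(mero X a D h₂)) :
    h₁ =ᶠ[𝓝 a] h₂ := by
  apply germ_eq_nhds X hX a H₁ H₂
  have h' := Filter.Germ.coe_eq.1 h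
  filter_upwards [h', S_mem_germFilter X a] with z hz1 hz2
  have hne : piPoly X a D z ≠ 0 := piPoly_ne_zero X a D hz2
  simp only [mero] at hz1
  exact mul_left_cancel₀ (inv_ne_zero hne) hz1

/-! ### The main construction -/

theorem exists_laurent_main (X : Finset (Fin n → ℝ)) (hX : ∀ ξ ∈ X, ξ ≠ 0)
    (a : Fin n → ℂ) (d : (Fin n → ℝ) → ℕ) (u : List (ℂ × List (Fin n → ℂ))) :
    ∃ L : Filter.Germ (germFilter X a) ℂ → ℂ, IsLaurentAt X a L ∧
      ∀ g : (Fin n → ℂ) → ℂ, AnalyticAt ℂ g a →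
        L (mero X a d g : Filter.Germ (germFilter X a) ℂ) = applyOp u g a := by
  classical
  obtain ⟨us, hus0, husS⟩ := exists_op_seq X hX a u
  set D : ℕ → (Fin n → ℝ) → ℕ := fun k ξ => d ξ + k with hD
  -- shifting a representative up by m levels
  have hshift : ∀ (k m : ℕ) (g : (Fin n → ℂ) → ℂ),
      (mero X a (D k) g : Filter.Germ (germFilter X a) ℂ)
        = ↑(mero X a (D (k+m)) (fun y => piPoly X a (fun _ => m) y * g y)) := by
    intro k m g
    rw [mero_germ_shift X a (D k) (fun _ => m) g]
    have he : (fun ξ => D k ξ + m) = D (k+m) := by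
      funext ξ; simp [hD, Nat.add_assoc]
    rw [he]
  -- well-definedness of the value of a representative
  have oneside : ∀ (k m : ℕ) (g₁ g₂ : (Fin n → ℂ) → ℂ), AnalyticAt ℂ g₁ a →
      AnalyticAt ℂ g₂ a →
      (mero X a (D k) g₁ : Filter.Germ (germFilter X a) ℂ) = ↑(mero X a (D (k+m)) g₂) →
      applyOp (us k) g₁ a = applyOp (us (k+m)) g₂ a := by
    intro k m g₁ g₂ h₁ h₂ heq
    rw [hshift k m g₁] at heq
    have hnh : (fun y => piPoly X a (fun _ => m) y * g₁ y) =ᶠ[𝓝 a] g₂ :=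
      mero_germ_cancel X hX a (D (k+m)) ((piPoly_analyticAt X a _ a).mul h₁) h₂ heq
    calc applyOp (us k) g₁ a
        = applyOp (us (k+m)) (fun y => piPoly X a (fun _ => m) y * g₁ y) a :=
          (op_seq_iter X a husS m k g₁ h₁).symm
      _ = applyOp (us (k+m)) g₂ a := applyOp_congr_at _ hnh
  have welldef : ∀ (k₁ k₂ : ℕ) (g₁ g₂ : (Fin n → ℂ) → ℂ), AnalyticAt ℂ g₁ a →
      AnalyticAt ℂ g₂ a →
      (mero X a (D k₁) g₁ : Filter.Germ (germFilter X a) ℂ) = ↑(mero X a (D k₂) g₂) →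
      applyOp (us k₁) g₁ a = applyOp (us k₂) g₂ a := by
    intro k₁ k₂ g₁ g₂ h₁ h₂ heq
    rcases le_total k₁ k₂ with h | h
    · obtain ⟨m, rfl⟩ := Nat.exists_eq_add_of_le h
      exact oneside k₁ m g₁ g₂ h₁ h₂ heq
    · obtain ⟨m, rfl⟩ := Nat.exists_eq_add_of_le h
      exact (oneside k₂ m g₂ g₁ h₂ h₁ heq.symm).symm
  -- the functional
  set L : Filter.Germ (germFilter X a) ℂ → ℂ := fun φ =>
    if h : ∃ p : ℕ × ((Fin n → ℂ) → ℂ), AnalyticAt ℂ p.2 a ∧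
        φ = ↑(mero X a (D p.1) p.2) then
      applyOp (us (Classical.choose h).1) (Classical.choose h).2 a
    else 0 with hL
  have hval : ∀ (k : ℕ) (g : (Fin n → ℂ) → ℂ), AnalyticAt ℂ g a →
      L ↑(mero X a (D k) g) = applyOp (us k) g a := by
    intro k g hg
    have hex : ∃ p : ℕ × ((Fin n → ℂ) → ℂ), AnalyticAt ℂ p.2 a ∧
        (mero X a (D k) g : Filter.Germ (germFilter X a) ℂ) = ↑(mero X a (D p.1) p.2) :=
      ⟨(k, g), hg, rfl⟩
    rw [hL]
    simp only [dif_pos hex]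
    have hp := Classical.choose_spec hex
    exact welldef (Classical.choose hex).1 k (Classical.choose hex).2 g hp.1 hg hp.2.symm
  -- arbitrary-level representatives
  have hlift : ∀ (d' : (Fin n → ℝ) → ℕ) (k : ℕ), (∀ ξ ∈ X, d' ξ ≤ D k ξ) →
      ∀ g : (Fin n → ℂ) → ℂ,
      (mero X a d' g : Filter.Germ (germFilter X a) ℂ)
        = ↑(mero X a (D k) (fun y => piPoly X a (fun ξ => D k ξ - d' ξ) y * g y)) := by
    intro d' k hk g
    rw [mero_germ_shift X a d' (fun ξ => D k ξ - d' ξ) g]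
    rw [mero_exponent_congr X a (e₂ := D k) (fun ξ hξ => Nat.add_sub_cancel' (hk ξ hξ))]
  have hrep : ∀ φ ∈ Ma X a, ∃ (k : ℕ) (G : (Fin n → ℂ) → ℂ), AnalyticAt ℂ G a ∧
      φ = ↑(mero X a (D k) G) := by
    rintro φ ⟨d', g, hg, rfl⟩
    refine ⟨X.sup d', fun y => piPoly X a (fun ξ => D (X.sup d') ξ - d' ξ) y * g y,
      (piPoly_analyticAt X a _ a).mul hg, ?_⟩
    exact hlift d' (X.sup d')
      (fun ξ hξ => le_trans (Finset.le_sup hξ) (Nat.le_add_left _ _)) g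
  refine ⟨L, ⟨?_, ?_, ?_⟩, ?_⟩
  · -- additivity on Ma
    intro φ ψ hφ hψ
    obtain ⟨k₁, G₁, hG₁, rfl⟩ := hrep φ hφ
    obtain ⟨k₂, G₂, hG₂, rfl⟩ := hrep ψ hψ
    obtain ⟨m₁, hm₁⟩ := Nat.exists_eq_add_of_le (le_max_left k₁ k₂)
    obtain ⟨m₂, hm₂⟩ := Nat.exists_eq_add_of_le (le_max_right k₁ k₂)
    set k := max k₁ k₂
    set G₁' : (Fin n → ℂ) → ℂ := fun y => piPoly X a (fun _ => m₁) y * G₁ y with hG₁'d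
    set G₂' : (Fin n → ℂ) → ℂ := fun y => piPoly X a (fun _ => m₂) y * G₂ y with hG₂'d
    have hG₁' : AnalyticAt ℂ G₁' a := (piPoly_analyticAt X a _ a).mul hG₁
    have hG₂' : AnalyticAt ℂ G₂' a := (piPoly_analyticAt X a _ a).mul hG₂
    have e₁ : (mero X a (D k₁) G₁ : Filter.Germ (germFilter X a) ℂ)
        = ↑(mero X a (D k) G₁') := by rw [hshift k₁ m₁ G₁, ← hm₁]
    have e₂ : (mero X a (D k₂) G₂ : Filter.Germ (germFilter X a) ℂ)
        = ↑(mero X a (D k) G₂') := by rw [hshift k₂ m₂ G₂, ← hm₂]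
    have hsum : (mero X a (D k) G₁' : Filter.Germ (germFilter X a) ℂ)
          + ↑(mero X a (D k) G₂')
        = ↑(mero X a (D k) (fun y => G₁' y + G₂' y)) := by
      rw [← Filter.Germ.coe_add]
      congr 1
      funext y
      simp only [mero, Pi.add_apply]
      ring
    rw [e₁, e₂, hsum, hval k (fun y => G₁' y + G₂' y) (by exact hG₁'.add hG₂'),
      hval k G₁' hG₁', hval k G₂' hG₂']
    exact applyOp_add_at (us k) hG₁' hG₂'
  · -- scalar multiplication on Ma
    intro c φ hφ
    obtain ⟨k, G, hG, rfl⟩ := hrep φ hφ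
    have hsm : c • (mero X a (D k) G : Filter.Germ (germFilter X a) ℂ)
        = ↑(mero X a (D k) (fun y => c * G y)) := by
      rw [← Filter.Germ.coe_smul]
      congr 1
      funext y
      simp only [mero, Pi.smul_apply, smul_eq_mul]
      ring
    rw [hsm, hval k (fun y => c * G y) (analyticAt_const.mul hG), hval k G hG]
    exact applyOp_const_mul_at (us k) c hG
  · -- the components
    intro d'
    set k := X.sup d' with hk
    have hkle : ∀ ξ ∈ X, d' ξ ≤ D k ξ :=
      fun ξ hξ => le_trans (Finset.le_sup hξ) (Nat.le_add_left _ _)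
    obtain ⟨u', hu'⟩ := exists_downstep a (piPoly X a (fun ξ => D k ξ - d' ξ))
      (piPoly_analyticAt X a _) (us k)
    refine ⟨u', fun g hg => ?_⟩
    rw [hlift d' k hkle g, hval k (fun y => piPoly X a (fun ξ => D k ξ - d' ξ) y * g y) ((piPoly_analyticAt X a _ a).mul hg)]
    exact (hu' g hg).symm
  · -- the d-component
    intro g hg
    have h0 : mero X a d g = mero X a (D 0) g :=
      mero_exponent_congr X a (fun ξ _ => by simp [hD]) g
    rw [h0, hval 0 g hg, hus0]

/-- Existence of Laurent functionals with a prescribed `d`-component:  for every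
`d : X → ℕ` and every `u ∈ S(V)` there is an `X`-Laurent functional `L` at `a` with
`L φ = u(π_{a,d} φ)(a)` for all `φ ∈ π_{a,d}⁻¹ O_a`.  In particular, there is an
`X`-Laurent functional at `a` with `L φ = φ(a)` for all germs `φ` holomorphic at `a`. -/
theorem exists_laurent_functional_with_component
    (X : Finset (Fin n → ℝ)) (hX : ∀ ξ ∈ X, ξ ≠ 0) (a : Fin n → ℂ)
    (d : (Fin n → ℝ) → ℕ) (u : List (ℂ × List (Fin n → ℂ))) :
    (∃ L : Filter.Germ (germFilter X a) ℂ → ℂ, IsLaurentAt X a L ∧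
      ∀ g : (Fin n → ℂ) → ℂ, AnalyticAt ℂ g a →
        L (mero X a d g : Filter.Germ (germFilter X a) ℂ) = applyOp u g a) ∧
    (∃ L : Filter.Germ (germFilter X a) ℂ → ℂ, IsLaurentAt X a L ∧
      ∀ g : (Fin n → ℂ) → ℂ, AnalyticAt ℂ g a →
        L (g : Filter.Germ (germFilter X a) ℂ) = g a) := by
  constructor
  · exact exists_laurent_main X hX a d u
  · obtain ⟨L, hLaur, hcomp⟩ := exists_laurent_main X hX a (fun _ => 0) [(1, [])]
    refine ⟨L, hLaur, fun g hg => ?_⟩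
    have hmz : mero X a (fun _ => 0) g = g := by
      funext y; simp [mero, piPoly]
    have h1 : (g : Filter.Germ (germFilter X a) ℂ)
        = (mero X a (fun _ => 0) g : Filter.Germ (germFilter X a) ℂ) := by rw [hmz]
    rw [h1, hcomp g hg]
    simp [applyOp, applyWord]

end LaurentFunctionals
end

section
/- Let V_0, V be finite-dimensional real inner product spaces and ι : V_0 → V an injective linear isometry with adjoint p : V → V_0. Let X ⊂ V \ {0} be finite with no element orthogonal to ι(V_0), and set X_0 = p(X) ⊂ V_0 \ {0}. Let a_0 ∈ (V_0)_C and a = ι(a_0). Then the pullback map ι^* : M(V_C, a, X, E) → M((V_0)_C, a_0, X_0, E), φ ↦ φ∘ι, is well-defined and surjective for every complete locally convex space E. -/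
namespace PullbackLaurent

/-- The complex bilinear pairing `⟨ξ, z⟩` of `ξ ∈ ℝᵐ` with `z ∈ ℂᵐ`. -/
noncomputable def cpair {m : ℕ} (ξ : Fin m → ℝ) (z : Fin m → ℂ) : ℂ :=
  ∑ i, (ξ i : ℂ) * z i

/-- The germ filter at `b`: neighborhoods of `b` minus the `Y`-hyperplanes through `b`. -/
noncomputable def germFilter {m : ℕ} (Y : Finset (Fin m → ℝ)) (b : Fin m → ℂ) :
    Filter (Fin m → ℂ) :=
  nhds b ⊓ Filter.principal {z | ∀ ξ ∈ Y, cpair ξ (z - b) ≠ 0}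

/-- The polynomial `π_{b,d}(z) = ∏_{ξ ∈ Y} ⟨ξ, z − b⟩^{d ξ}`. -/
noncomputable def piPoly {m : ℕ} (Y : Finset (Fin m → ℝ)) (b : Fin m → ℂ)
    (d : (Fin m → ℝ) → ℕ) : (Fin m → ℂ) → ℂ :=
  fun z => ∏ ξ ∈ Y, cpair ξ (z - b) ^ d ξ

/-- `g` is (weakly) holomorphic in a neighborhood of `b`, with values in a complete
locally convex space `E`: every continuous linear functional composed with `g` is
analytic on a fixed neighborhood of `b`. -/
def WAnalyticAt {m : ℕ} {E : Type*} [AddCommGroup E] [Module ℂ E] [TopologicalSpace E]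
    (g : (Fin m → ℂ) → E) (b : Fin m → ℂ) : Prop :=
  ∃ U ∈ nhds b, ∀ l : E →L[ℂ] ℂ, ∀ z ∈ U, AnalyticAt ℂ (fun w => l (g w)) z

/-- `M(b, Y, E)`: germs at `b` of `E`-valued meromorphic functions with singular locus
at `b` contained in the union of the `Y`-hyperplanes through `b`. -/
def MaE {m : ℕ} {E : Type*} [AddCommGroup E] [Module ℂ E] [TopologicalSpace E]
    (Y : Finset (Fin m → ℝ)) (b : Fin m → ℂ) :
    Set (Filter.Germ (germFilter Y b) E) :=
  {φ | ∃ (d : (Fin m → ℝ) → ℕ) (g : (Fin m → ℂ) → E), WAnalyticAt g b ∧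
    φ = ((fun z => (piPoly Y b d z)⁻¹ • g z) : Filter.Germ (germFilter Y b) E)}

/-- The complexification `ℂᵏ → ℂⁿ` of a real linear map `ℝᵏ → ℝⁿ`. -/
noncomputable def cplxMap {k n : ℕ} (f : (Fin k → ℝ) →ₗ[ℝ] (Fin n → ℝ)) :
    (Fin k → ℂ) →ₗ[ℂ] (Fin n → ℂ) :=
  Matrix.toLin' ((LinearMap.toMatrix' f).map (fun x : ℝ => (x : ℂ)))

/- auxiliary lemmas -/
section Aux
open Filter

lemma cpair_cplxMap {k n : ℕ} (f : (Fin k → ℝ) →ₗ[ℝ] (Fin n → ℝ))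
    (ξ : Fin n → ℝ) (η : Fin k → ℝ)
    (h : ∀ w : Fin k → ℝ, ∑ i, ξ i * f w i = ∑ j, η j * w j)
    (z : Fin k → ℂ) : cpair ξ (cplxMap f z) = cpair η z := by
  classical
  have key : ∀ j, (∑ i, (ξ i : ℂ) * ((LinearMap.toMatrix' f).map (fun x : ℝ => (x:ℂ)) i j))
      = (η j : ℂ) := by
    intro j
    have h1 := h (fun j' => if j' = j then 1 else 0)
    have h2 : ∑ j', η j' * (if j' = j then 1 else 0) = η j := by simp
    rw [h2] at h1
    calc ∑ i, (ξ i : ℂ) * ((LinearMap.toMatrix' f).map (fun x : ℝ => (x:ℂ)) i j)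
        = ((∑ i, ξ i * f (fun j' => if j' = j then 1 else 0) i : ℝ) : ℂ) := by
          push_cast [Matrix.map_apply, LinearMap.toMatrix'_apply]
          rw [show (fun j' => if j' = j then (1:ℝ) else 0) = Pi.single j 1 from
            funext fun j' => (Pi.single_apply j (1:ℝ) j').symm]
      _ = _ := by rw [h1]
  unfold cpair cplxMap
  simp only [Matrix.toLin'_apply, Matrix.mulVec, dotProduct]
  calc ∑ i, (ξ i : ℂ) * ∑ j, (LinearMap.toMatrix' f).map (fun x:ℝ => (x:ℂ)) i j * z j
      = ∑ j, (∑ i, (ξ i:ℂ) * (LinearMap.toMatrix' f).map (fun x:ℝ => (x:ℂ)) i j) * z j := by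
        simp_rw [Finset.mul_sum, Finset.sum_mul, mul_assoc]
        exact Finset.sum_comm
    _ = ∑ j, (η j : ℂ) * z j := by simp_rw [key]

lemma cpair_single {m : ℕ} (j : Fin m) (u : Fin m → ℂ) :
    cpair (fun j' => if j' = j then 1 else 0) u = u j := by
  unfold cpair
  simp [apply_ite (fun x:ℝ => (x:ℂ)), Finset.sum_ite_eq', ite_mul]

lemma WAnalyticAt.comp_lm {m m' : ℕ} {E : Type*} [AddCommGroup E] [Module ℂ E]
    [TopologicalSpace E] {g : (Fin m → ℂ) → E} {b' : Fin m → ℂ}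
    (T : (Fin m' → ℂ) →ₗ[ℂ] (Fin m → ℂ)) (b : Fin m' → ℂ) (hb : T b = b')
    (hg : WAnalyticAt g b') : WAnalyticAt (fun z => g (T z)) b := by
  obtain ⟨U, hU, hA⟩ := hg
  refine ⟨T ⁻¹' U, ?_, ?_⟩
  · exact T.toContinuousLinearMap.continuous.continuousAt.preimage_mem_nhds (hb ▸ hU)
  · intro l z hz
    have h1 : AnalyticAt ℂ (fun w => l (g w)) (T z) := hA l (T z) hz
    have h2 : AnalyticAt ℂ (fun w => T w) z := by
      have := T.toContinuousLinearMap.analyticAt z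
      exact this
    exact h1.comp h2

end Aux

/-- Let `ι : V₀ → V` be an injective linear map between real inner product spaces, with
the inner product of `V₀` the pullback of that of `V`, and let `p` be the adjoint of `ι`.
Let `X ⊆ V \ {0}` be finite with no element orthogonal to `ι(V₀)` and `X₀ = p(X)`.
Then for `a₀ ∈ (V₀)_ℂ` and `a = ι(a₀)`, the pullback `ι^* : φ ↦ φ ∘ ι` is a well-defined
and surjective map `M(V_ℂ, a, X, E) → M((V₀)_ℂ, a₀, X₀, E)`, for every complete locally
convex space `E`. -/
theorem pullback_well_defined_and_surjective {k n : ℕ}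
    {E : Type*} [AddCommGroup E] [Module ℂ E] [UniformSpace E] [IsUniformAddGroup E]
    [ContinuousSMul ℂ E] [CompleteSpace E] [T2Space E]
    [Module ℝ E] [IsScalarTower ℝ ℂ E] [LocallyConvexSpace ℝ E]
    (ι : (Fin k → ℝ) →ₗ[ℝ] (Fin n → ℝ)) (hinj : Function.Injective ι)
    (hiso : ∀ v w : Fin k → ℝ, ∑ i, ι v i * ι w i = ∑ i, v i * w i)
    (p : (Fin n → ℝ) →ₗ[ℝ] (Fin k → ℝ))
    (hadj : ∀ (z : Fin n → ℝ) (w : Fin k → ℝ), ∑ i, p z i * w i = ∑ i, z i * ι w i)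
    (X : Finset (Fin n → ℝ)) (hX : ∀ ξ ∈ X, ξ ≠ 0)
    (horth : ∀ ξ ∈ X, ∃ v : Fin k → ℝ, ∑ i, ξ i * ι v i ≠ 0)
    (X₀ : Finset (Fin k → ℝ)) (hX₀ : ∀ η, η ∈ X₀ ↔ ∃ ξ ∈ X, η = p ξ)
    (a₀ : Fin k → ℂ) :
    (∀ f f' : (Fin n → ℂ) → E,
      f =ᶠ[germFilter X (cplxMap ι a₀)] f' →
      (fun w => f (cplxMap ι w)) =ᶠ[germFilter X₀ a₀] fun w => f' (cplxMap ι w)) ∧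
    (∀ f : (Fin n → ℂ) → E,
      (f : Filter.Germ (germFilter X (cplxMap ι a₀)) E) ∈ MaE X (cplxMap ι a₀) →
      ((fun w => f (cplxMap ι w)) : Filter.Germ (germFilter X₀ a₀) E) ∈ MaE X₀ a₀) ∧
    (∀ φ₀ : Filter.Germ (germFilter X₀ a₀) E, φ₀ ∈ MaE X₀ a₀ →
      ∃ f : (Fin n → ℂ) → E,
        (f : Filter.Germ (germFilter X (cplxMap ι a₀)) E) ∈ MaE X (cplxMap ι a₀) ∧
        φ₀ = ((fun w => f (cplxMap ι w)) : Filter.Germ (germFilter X₀ a₀) E)) := by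
  classical
  set a : Fin n → ℂ := cplxMap ι a₀ with ha
  have hcι : ∀ (ξ : Fin n → ℝ) (z : Fin k → ℂ),
      cpair ξ (cplxMap ι z) = cpair (p ξ) z := by
    intro ξ z
    exact cpair_cplxMap ι ξ (p ξ) (fun w => (hadj ξ w).symm) z
  have hpι : ∀ w : Fin k → ℝ, p (ι w) = w := by
    intro w; funext j
    have h1 := hadj (ι w) (fun j' => if j' = j then 1 else 0)
    rw [hiso w (fun j' => if j' = j then 1 else 0)] at h1
    simpa [mul_ite, mul_one, mul_zero, Finset.sum_ite_eq'] using h1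
  have hcp : ∀ (η : Fin k → ℝ) (u : Fin n → ℂ),
      cpair η (cplxMap p u) = cpair (ι η) u := by
    intro η u
    refine cpair_cplxMap p η (ι η) (fun v => ?_) u
    calc ∑ i, η i * p v i = ∑ i, p v i * η i := by simp [mul_comm]
      _ = ∑ i, v i * ι η i := hadj v η
      _ = ∑ j, ι η j * v j := by simp [mul_comm]
  have hpιC : ∀ z : Fin k → ℂ, cplxMap p (cplxMap ι z) = z := by
    intro z; funext j
    have e1 : cplxMap p (cplxMap ι z) j
        = cpair (fun j' => if j' = j then 1 else 0) (cplxMap p (cplxMap ι z)) :=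
      (cpair_single j _).symm
    rw [e1, hcp, hcι, hpι, cpair_single]
  have hmem : ∀ ξ ∈ X, p ξ ∈ X₀ := fun ξ hξ => (hX₀ (p ξ)).2 ⟨ξ, hξ, rfl⟩
  have htend : Filter.Tendsto (cplxMap ι) (germFilter X₀ a₀) (germFilter X a) := by
    unfold germFilter
    refine Filter.tendsto_inf.2 ⟨?_, ?_⟩
    · exact ((cplxMap ι).toContinuousLinearMap.continuous.tendsto a₀).mono_left inf_le_left
    · rw [Filter.tendsto_principal, Filter.eventually_inf_principal]
      refine Filter.Eventually.of_forall (fun w hw => ?_)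
      intro ξ hξ
      rw [show cplxMap ι w - a = cplxMap ι (w - a₀) from by rw [map_sub], hcι]
      exact hw (p ξ) (hmem ξ hξ)
  have hpull : ∀ (d : (Fin n → ℝ) → ℕ) (w : Fin k → ℂ),
      piPoly X a d (cplxMap ι w)
        = piPoly X₀ a₀ (fun η => ∑ ξ ∈ X.filter (fun ξ => p ξ = η), d ξ) w := by
    intro d w
    unfold piPoly
    have e1 : ∀ ξ ∈ X, cpair ξ (cplxMap ι w - a) ^ d ξ = cpair (p ξ) (w - a₀) ^ d ξ := by
      intro ξ _
      rw [show cplxMap ι w - a = cplxMap ι (w - a₀) from by rw [map_sub], hcι]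
    rw [Finset.prod_congr rfl e1,
      ← Finset.prod_fiberwise_of_maps_to hmem (fun ξ => cpair (p ξ) (w - a₀) ^ d ξ)]
    refine Finset.prod_congr rfl (fun η hη => ?_)
    rw [show (∏ ξ ∈ X.filter (fun ξ => p ξ = η), cpair (p ξ) (w - a₀) ^ d ξ)
        = ∏ ξ ∈ X.filter (fun ξ => p ξ = η), cpair η (w - a₀) ^ d ξ from
      Finset.prod_congr rfl (fun ξ hξ => by rw [(Finset.mem_filter.1 hξ).2])]
    exact Finset.prod_pow_eq_pow_sum _ _ _
  refine ⟨fun f f' h => h.comp_tendsto htend, ?_, ?_⟩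
  · rintro f ⟨d, g, hg, heq⟩
    have hfe : f =ᶠ[germFilter X a] fun z => (piPoly X a d z)⁻¹ • g z :=
      Filter.Germ.coe_eq.1 heq
    refine ⟨fun η => ∑ ξ ∈ X.filter (fun ξ => p ξ = η), d ξ, fun w => g (cplxMap ι w),
      WAnalyticAt.comp_lm (cplxMap ι) a₀ ha.symm hg, ?_⟩
    refine Filter.Germ.coe_eq.2 ?_
    refine (hfe.comp_tendsto htend).trans (Filter.EventuallyEq.of_eq (funext fun w => ?_))
    show (piPoly X a d (cplxMap ι w))⁻¹ • g (cplxMap ι w) = _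
    rw [hpull]
  · rintro φ₀ ⟨d₀, g₀, hg₀, heq⟩
    set sec : (Fin k → ℝ) → (Fin n → ℝ) := fun η =>
      if h : ∃ ξ ∈ X, η = p ξ then h.choose else 0 with hsec
    have hsecX : ∀ η ∈ X₀, sec η ∈ X ∧ p (sec η) = η := by
      intro η hη
      have h := (hX₀ η).1 hη
      simp only [hsec, dif_pos h]
      obtain ⟨hmem', heq'⟩ := h.choose_spec
      exact ⟨hmem', heq'.symm⟩
    set d : (Fin n → ℝ) → ℕ := fun ξ => ∑ η ∈ X₀.filter (fun η => sec η = ξ), d₀ η with hd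
    have hds : ∀ η₀ ∈ X₀, (∑ ξ ∈ X.filter (fun ξ => p ξ = η₀), d ξ) = d₀ η₀ := by
      intro η₀ hη₀
      calc ∑ ξ ∈ X.filter (fun ξ => p ξ = η₀), d ξ
          = ∑ ξ ∈ X.filter (fun ξ => p ξ = η₀), ∑ η ∈ X₀, if sec η = ξ then d₀ η else 0 :=
            Finset.sum_congr rfl (fun ξ _ => by rw [hd]; exact Finset.sum_filter _ _)
        _ = ∑ η ∈ X₀, ∑ ξ ∈ X.filter (fun ξ => p ξ = η₀), if sec η = ξ then d₀ η else 0 :=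
            Finset.sum_comm
        _ = ∑ η ∈ X₀, if η = η₀ then d₀ η else 0 := by
            refine Finset.sum_congr rfl (fun η hη => ?_)
            rw [Finset.sum_ite_eq (X.filter fun ξ => p ξ = η₀) (sec η) (fun _ => d₀ η)]
            have hc : (sec η ∈ X.filter fun ξ => p ξ = η₀) ↔ η = η₀ := by
              rw [Finset.mem_filter]
              constructor
              · rintro ⟨-, h2⟩; rw [← (hsecX η hη).2, h2]
              · rintro rfl; exact ⟨(hsecX η hη).1, (hsecX η hη).2⟩
            rw [if_congr hc rfl rfl]
        _ = d₀ η₀ := by rw [Finset.sum_ite_eq' X₀ η₀ (fun η => d₀ η)]; exact if_pos hη₀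
    refine ⟨fun v => (piPoly X a d v)⁻¹ • g₀ (cplxMap p v),
      ⟨d, fun v => g₀ (cplxMap p v),
        WAnalyticAt.comp_lm (cplxMap p) a (by rw [ha]; exact hpιC a₀) hg₀, rfl⟩, ?_⟩
    rw [heq]
    congr 1
    funext w
    show (piPoly X₀ a₀ d₀ w)⁻¹ • g₀ w
        = (piPoly X a d (cplxMap ι w))⁻¹ • g₀ (cplxMap p (cplxMap ι w))
    rw [hpιC, hpull]
    have : piPoly X₀ a₀ (fun η => ∑ ξ ∈ X.filter (fun ξ => p ξ = η), d ξ) w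
        = piPoly X₀ a₀ d₀ w := by
      unfold piPoly
      exact Finset.prod_congr rfl fun η hη => congrArg (cpair η (w - a₀) ^ ·) (hds η hη)
    rw [this]

end PullbackLaurent
end
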